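/- Let L be a class of finite Δ-structures definable by a monotone monadic SNP sentence (inequalities allowed). Then there exist a monadic signature Δ' disjoint from Δ and a finite set F' of structures in Rel^cov(Δ,Δ') such that L = Φ(Forb_inj(F')): a finite Δ-structure A satisfies the sentence if and only if A has a lift A' ∈ Rel^cov(Δ,Δ') admitting no injective homomorphism from any member of F'. -/

import Mathlib

/-- A finite relational structure of signature `σ`, where symbol `s : σ` has arity `ar s`.
`rel s` is the set of `ar s`-tuples (written as functions `Fin (ar s) → carrier`)
that are in the relation `s`. -/
structure RStruct (σ : Type) (ar : σ → ℕ) : Type 1 where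
  carrier : Type
  fin : Finite carrier
  rel : ∀ s : σ, Set (Fin (ar s) → carrier)

namespace RStruct

variable {σ σ' : Type} {ar : σ → ℕ} {ar' : σ' → ℕ}

/-- `f` is a homomorphism from `A` to `B`. -/
def IsHom (A B : RStruct σ ar) (f : A.carrier → B.carrier) : Prop :=
  ∀ s : σ, ∀ t ∈ A.rel s, (f ∘ t) ∈ B.rel s

/-- There exists a homomorphism `A → B`. -/
def Hom (A B : RStruct σ ar) : Prop := ∃ f, IsHom A B f

/-- Homomorphic equivalence. -/
def HomEquiv (A B : RStruct σ ar) : Prop := Hom A B ∧ Hom B A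

/-- `Forb F` : structures admitting no homomorphism from any member of `F`. -/
def Forb (F : Set (RStruct σ ar)) : Set (RStruct σ ar) :=
  {A | ∀ F0 ∈ F, ¬ Hom F0 A}

/-- `CSP D` : structures admitting a homomorphism to some member of `D`. -/
def CSP (D : Set (RStruct σ ar)) : Set (RStruct σ ar) :=
  {A | ∃ D0 ∈ D, Hom A D0}

/-- `A` has a cycle of length `n`: either (degenerate case `n = 1`) a relational tuple with
a repeated coordinate, or (`n ≥ 2`) pairwise distinct elements `x 0, …, x (n-1)` and pairwise
distinct relational tuples `r 0, …, r (n-1)` such that `r i` contains both `x i` and `x (i+1)`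
(indices cyclically, `x n = x 0`). -/
def HasCycleOfLength (A : RStruct σ ar) (n : ℕ) : Prop :=
  (n = 1 ∧ ∃ s : σ, ∃ t ∈ A.rel s, ¬ Function.Injective t) ∨
  (2 ≤ n ∧ ∃ x : ℕ → A.carrier, ∃ r : ℕ → Σ s : σ, Fin (ar s) → A.carrier,
    x n = x 0 ∧
    (∀ i < n, ∀ j < n, x i = x j → i = j) ∧
    (∀ i < n, ∀ j < n, r i = r j → i = j) ∧
    (∀ i < n, (r i).2 ∈ A.rel (r i).1 ∧ (∃ j, (r i).2 j = x i) ∧ (∃ j, (r i).2 j = x (i + 1))))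

def HasCycle (A : RStruct σ ar) : Prop := ∃ n, A.HasCycleOfLength n

/-- A forest is a structure with no cycle. -/
def IsForest (A : RStruct σ ar) : Prop := ¬ A.HasCycle

/-- The shadow (forgetful functor `Φ`) of a structure of the lifted signature `σ ⊕ σ'`:
forget the `σ'`-relations. -/
def shadow (A' : RStruct (σ ⊕ σ') (Sum.elim ar ar')) : RStruct σ ar :=
  ⟨A'.carrier, A'.fin, fun s => A'.rel (Sum.inl s)⟩

/-- The covering condition for lifted structures in which all symbols of `σ'` have the
common arity `r`: every `r`-tuple lies in some `σ'`-relation. -/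
def Covers (r : ℕ) (A' : RStruct (σ ⊕ σ') (Sum.elim ar fun _ => r)) : Prop :=
  ∀ t : Fin r → A'.carrier, ∃ s' : σ', t ∈ A'.rel (Sum.inr s')

end RStruct

/-- A clause of an SNP sentence with `n` universally quantified variables:
`¬(α ∧ β ∧ ε)`, given by positive and negated input atoms (`alpha`, `nalpha`),
positive and negated proof atoms (`beta`, `nbeta`) and inequalities `eps`. -/
structure SNPClause (σ : Type) (ar : σ → ℕ) (π : Type) (arP : π → ℕ) (n : ℕ) where
  alpha : List (Σ s : σ, Fin (ar s) → Fin n)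
  nalpha : List (Σ s : σ, Fin (ar s) → Fin n)
  beta : List (Σ p : π, Fin (arP p) → Fin n)
  nbeta : List (Σ p : π, Fin (arP p) → Fin n)
  eps : List (Fin n × Fin n)

/-- An SNP sentence `∃Π ∀x̄ ⋀ᵢ ¬(αᵢ ∧ βᵢ ∧ εᵢ)` over input signature `σ` with existential
(proof) signature `π`. -/
structure SNPSentence (σ : Type) (ar : σ → ℕ) (π : Type) (arP : π → ℕ) where
  nvars : ℕ
  clauses : List (SNPClause σ ar π arP nvars)

namespace SNPClause

variable {σ π : Type} {ar : σ → ℕ} {arP : π → ℕ} {n : ℕ}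

/-- The conjunction `α ∧ β ∧ ε` of a clause holds in `A` under the interpretation `P` of the
proof relations and the valuation `v` of the variables. -/
def Holds (c : SNPClause σ ar π arP n) (A : RStruct σ ar)
    (P : ∀ p : π, Set (Fin (arP p) → A.carrier)) (v : Fin n → A.carrier) : Prop :=
  (∀ a ∈ c.alpha, (v ∘ a.2) ∈ A.rel a.1) ∧
  (∀ a ∈ c.nalpha, (v ∘ a.2) ∉ A.rel a.1) ∧
  (∀ b ∈ c.beta, (v ∘ b.2) ∈ P b.1) ∧
  (∀ b ∈ c.nbeta, (v ∘ b.2) ∉ P b.1) ∧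
  (∀ e ∈ c.eps, v e.1 ≠ v e.2)

/-- The variable `x` occurs in the clause `c`. -/
def occurs (c : SNPClause σ ar π arP n) (x : Fin n) : Prop :=
  (∃ a ∈ c.alpha, ∃ j, a.2 j = x) ∨ (∃ a ∈ c.nalpha, ∃ j, a.2 j = x) ∨
  (∃ b ∈ c.beta, ∃ j, b.2 j = x) ∨ (∃ b ∈ c.nbeta, ∃ j, b.2 j = x) ∨
  (∃ e ∈ c.eps, e.1 = x ∨ e.2 = x)

end SNPClause

namespace SNPSentence

variable {σ π : Type} {ar : σ → ℕ} {arP : π → ℕ}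

/-- The finite structure `A` satisfies the SNP sentence `φ`: the proof relations can be
interpreted so that no clause conjunction is realized by any valuation. -/
def Sat (φ : SNPSentence σ ar π arP) (A : RStruct σ ar) : Prop :=
  ∃ P : ∀ p : π, Set (Fin (arP p) → A.carrier),
    ∀ v : Fin φ.nvars → A.carrier, ∀ c ∈ φ.clauses, ¬ c.Holds A P v

/-- Monotone: no negated input atoms. -/
def Monotone (φ : SNPSentence σ ar π arP) : Prop := ∀ c ∈ φ.clauses, c.nalpha = []

/-- Without inequality: no inequalities. -/
def NoIneq (φ : SNPSentence σ ar π arP) : Prop := ∀ c ∈ φ.clauses, c.eps = []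

/-- Primitive: in every clause, for every proof symbol `p` and every tuple of variables
occurring in the clause, either the corresponding atom or its negation occurs in the clause. -/
def Primitive (φ : SNPSentence σ ar π arP) : Prop :=
  ∀ c ∈ φ.clauses, ∀ p : π, ∀ t : Fin (arP p) → Fin φ.nvars,
    (∀ j, c.occurs (t j)) → (⟨p, t⟩ ∈ c.beta ∨ ⟨p, t⟩ ∈ c.nbeta)

end SNPSentence

namespace RStruct

/-- There exists an injective homomorphism `A → B`. -/
def HomInj {σ : Type} {ar : σ → ℕ} (A B : RStruct σ ar) : Prop :=
  ∃ f, IsHom A B f ∧ Function.Injective f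

end RStruct

open RStruct

namespace MMSNPAux

variable {σ π : Type} {ar : σ → ℕ} {arP : π → ℕ}

/-- The unique index into a monadic tuple. -/
def i0 (hm : ∀ p : π, arP p = 1) (p : π) : Fin (arP p) :=
  ⟨0, by rw [hm]; exact Nat.one_pos⟩

theorem eq_i0 (hm : ∀ p : π, arP p = 1) (p : π) (j : Fin (arP p)) : j = i0 hm p := by
  have h2 := j.2
  have h := hm p
  apply Fin.ext
  simp only [i0]
  omega

theorem tuple_eq {X : Type} (hm : ∀ p : π, arP p = 1) (p : π) (t : Fin (arP p) → X) :
    t = fun _ => t (i0 hm p) :=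
  funext fun j => by rw [eq_i0 hm p j]

/-- Compatibility of a merge map `q` and a coloring `χ` with the clause `c`. -/
def Good {n : ℕ} (hm : ∀ p : π, arP p = 1) (c : SNPClause σ ar π arP n) {m : ℕ}
    (q : Fin n → Fin m) (χ : Fin m → Set π) : Prop :=
  (∀ b ∈ c.beta, b.1 ∈ χ (q (b.2 (i0 hm b.1)))) ∧
  (∀ b ∈ c.nbeta, b.1 ∉ χ (q (b.2 (i0 hm b.1)))) ∧
  (∀ e ∈ c.eps, q e.1 ≠ q e.2)

/-- The forbidden lifted structure extracted from a clause `c`, a merge map `q` and a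
coloring `χ`. -/
def mkForb {n : ℕ} (c : SNPClause σ ar π arP n) (m : ℕ)
    (q : Fin n → Fin m) (χ : Fin m → Set π) :
    RStruct (σ ⊕ Set π) (Sum.elim ar fun _ => 1) where
  carrier := Fin m
  fin := inferInstance
  rel s :=
    match s with
    | Sum.inl s => {t | ∃ t' : Fin (ar s) → Fin n,
        (⟨s, t'⟩ : Σ s : σ, Fin (ar s) → Fin n) ∈ c.alpha ∧ t = q ∘ t'}
    | Sum.inr S => {t | χ (t ⟨0, Nat.one_pos⟩) = S}

end MMSNPAux

open MMSNPAux

/-- every class of finite `Δ`-structures defined by a monotone monadic SNP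
sentence (inequalities allowed) equals `Φ(Forb_inj F')` for a monadic lift signature `σ'`
and a finite set `F'` of covering lifted structures, where forbidding is via injective
homomorphisms. -/
theorem monotone_monadic_snp_as_forbidden_inj_lifts {σ π : Type} {ar : σ → ℕ} {arP : π → ℕ}
    [Finite σ] [Finite π]
    (φ : SNPSentence σ ar π arP) (hmono : φ.Monotone) (hmonadic : ∀ p : π, arP p = 1) :
    ∃ (σ' : Type) (_ : Finite σ')
      (F' : Set (RStruct (σ ⊕ σ') (Sum.elim ar fun _ => 1))),
      F'.Finite ∧ (∀ F0 ∈ F', Covers 1 F0) ∧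
      ∀ A : RStruct σ ar,
        φ.Sat A ↔ ∃ A' : RStruct (σ ⊕ σ') (Sum.elim ar fun _ => 1),
          Covers 1 A' ∧ shadow A' = A ∧ ∀ F0 ∈ F', ¬ HomInj F0 A' := by
  classical
  set n := φ.nvars with hn
  refine ⟨Set π, inferInstance,
    ⋃ c ∈ {c | c ∈ φ.clauses},
      (fun x : Σ m : Fin (n + 1), (Fin n → Fin m.1) × (Fin m.1 → Set π) =>
        mkForb c x.1.1 x.2.1 x.2.2) '' {x | Good hmonadic c x.2.1 x.2.2},
    ?_, ?_, ?_⟩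
  · exact Set.Finite.biUnion (List.finite_toSet _) fun c _ => (Set.toFinite _).image _
  · rintro F0 hF0
    simp only [Set.mem_iUnion, Set.mem_image] at hF0
    obtain ⟨c, hc, x, hx, rfl⟩ := hF0
    intro t
    exact ⟨x.2.2 (t 0), rfl⟩
  · intro A
    constructor
    · -- Sat → lift exists
      rintro ⟨P, hP⟩
      refine ⟨⟨A.carrier, A.fin, fun s =>
        match s with
        | Sum.inl s => A.rel s
        | Sum.inr S => {t | {p | (fun _ : Fin (arP p) => t ⟨0, Nat.one_pos⟩) ∈ P p} = S}⟩,
        ?_, ?_, ?_⟩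
      · intro t
        exact ⟨{p | (fun _ : Fin (arP p) => t ⟨0, Nat.one_pos⟩) ∈ P p}, rfl⟩
      · rfl
      · rintro F0 hF0 ⟨f, hf, hfinj⟩
        simp only [Set.mem_iUnion, Set.mem_image] at hF0
        obtain ⟨c, hc, ⟨⟨m, hmn⟩, q, χ⟩, ⟨hβ, hnβ, hε⟩, rfl⟩ := hF0
        refine hP (f ∘ q) c hc ⟨?_, ?_, ?_, ?_, ?_⟩
        · intro a ha
          exact hf (Sum.inl a.1) (q ∘ a.2) ⟨a.2, ha, rfl⟩
        · intro a ha
          rw [hmono c hc] at ha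
          exact absurd ha List.not_mem_nil
        · intro b hb
          have hcol := hf (Sum.inr (χ (q (b.2 (i0 hmonadic b.1)))))
            (fun _ => q (b.2 (i0 hmonadic b.1))) rfl
          have hcol' : {p | (fun _ : Fin (arP p) =>
              f (q (b.2 (i0 hmonadic b.1)))) ∈ P p} = χ (q (b.2 (i0 hmonadic b.1))) := hcol
          have hb1 : b.1 ∈ {p | (fun _ : Fin (arP p) =>
              f (q (b.2 (i0 hmonadic b.1)))) ∈ P p} := by
            rw [hcol']; exact hβ b hb
          rw [tuple_eq hmonadic b.1 ((f ∘ q) ∘ b.2)]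
          exact hb1
        · intro b hb
          have hcol := hf (Sum.inr (χ (q (b.2 (i0 hmonadic b.1)))))
            (fun _ => q (b.2 (i0 hmonadic b.1))) rfl
          have hcol' : {p | (fun _ : Fin (arP p) =>
              f (q (b.2 (i0 hmonadic b.1)))) ∈ P p} = χ (q (b.2 (i0 hmonadic b.1))) := hcol
          have hb1 : b.1 ∉ {p | (fun _ : Fin (arP p) =>
              f (q (b.2 (i0 hmonadic b.1)))) ∈ P p} := by
            rw [hcol']; exact hnβ b hb
          rw [tuple_eq hmonadic b.1 ((f ∘ q) ∘ b.2)]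
          exact hb1
        · intro e he h
          exact hε e he (hfinj h)
    · -- lift exists → Sat
      rintro ⟨A', hcov, rfl, hforb⟩
      haveI := A'.fin
      haveI : Fintype A'.carrier := Fintype.ofFinite _
      -- a canonical color for each element
      have hχA : ∀ a : A'.carrier, ∃ S : Set π,
          (fun _ : Fin 1 => a) ∈ A'.rel (Sum.inr S) := fun a => hcov (fun _ => a)
      choose χA hχA using hχA
      refine ⟨fun p => {t | p ∈ χA (t (i0 hmonadic p))}, ?_⟩
      intro v c hc hHolds
      obtain ⟨hα, -, hβ, hnβ, hε⟩ := hHolds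
      -- factor v injectively through its range
      let R := Set.range v
      let m := Fintype.card R
      let e : R ≃ Fin m := Fintype.equivFin R
      let q : Fin n → Fin m := fun i => e ⟨v i, ⟨i, rfl⟩⟩
      let f : Fin m → A'.carrier := fun j => (e.symm j).1
      have hvf : ∀ i, f (q i) = v i := fun i => by
        show ((e.symm (e ⟨v i, ⟨i, rfl⟩⟩)) : R).1 = v i
        rw [Equiv.symm_apply_apply]
      have hfinj : Function.Injective f := fun a b h =>
        e.symm.injective (Subtype.ext h)
      have hmn : m ≤ n := by
        have hs : Function.Surjective (fun i : Fin n => (⟨v i, ⟨i, rfl⟩⟩ : R)) := by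
          rintro ⟨x, i, rfl⟩; exact ⟨i, rfl⟩
        have h1 := Fintype.card_le_of_surjective _ hs
        rwa [Fintype.card_fin] at h1
      let χ : Fin m → Set π := χA ∘ f
      have hgood : Good hmonadic c q χ := by
        refine ⟨fun b hb => ?_, fun b hb => ?_, fun he hmem h => ?_⟩
        · have := hβ b hb
          show b.1 ∈ χA (f (q (b.2 (i0 hmonadic b.1))))
          rw [hvf]
          exact this
        · have := hnβ b hb
          show b.1 ∉ χA (f (q (b.2 (i0 hmonadic b.1))))
          rw [hvf]
          exact this
        · exact hε he hmem (by rw [← hvf he.1, ← hvf he.2, h])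
      refine hforb (mkForb c m q χ) ?_ ⟨f, ?_, hfinj⟩
      · simp only [Set.mem_iUnion, Set.mem_image]
        exact ⟨c, hc, ⟨⟨m, by omega⟩, q, χ⟩, hgood, rfl⟩
      · intro s t ht
        match s with
        | Sum.inl s =>
          obtain ⟨t', ht', rfl⟩ := ht
          have hcomp : f ∘ (q ∘ t') = v ∘ t' := funext fun i => hvf (t' i)
          refine (congrArg (· ∈ A'.rel (Sum.inl s)) hcomp).mpr ?_
          exact hα ⟨s, t'⟩ ht'
        | Sum.inr S =>
          have ht0 : χA (f (t ⟨0, Nat.one_pos⟩)) = S := ht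
          have hall : f ∘ t = fun _ => f (t ⟨0, Nat.one_pos⟩) := by
            funext j
            have hj : j = ⟨0, Nat.one_pos⟩ := Fin.ext (Nat.lt_one_iff.mp j.2)
            rw [hj]; rfl
          have key := hχA (f (t ⟨0, Nat.one_pos⟩))
          rw [ht0] at key
          exact (congrArg (· ∈ A'.rel (Sum.inr S)) hall).mpr key
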